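/- For thresholds k₁ ≤ … ≤ k_r with N ≥ k_r + 1, the winning weight satisfies the recurrence W(N, k₁,…,k_r) = θ · P_{N−1} · W(N−1, k₁,…,k_r) + T_{≤r−1}(N−1, k₁,…,k_r). -/

import Mathlib

open Finset

/-- Number of inversions (Kendall tau statistic) of a permutation. -/
def inversions {N : ℕ} (π : Equiv.Perm (Fin N)) : ℕ :=
  (Finset.univ.filter (fun x : Fin N × Fin N => x.1 < x.2 ∧ π x.2 < π x.1)).card

/-- `P_k(θ) = 1 + θ + … + θ^(k-1)`. -/
def mallowsP (θ : ℝ) (k : ℕ) : ℝ := ∑ i ∈ Finset.range k, θ ^ i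

/-- `(P_k)! = P_k · P_(k-1) · … · P_1`. -/
def mallowsPFact (θ : ℝ) (k : ℕ) : ℝ := ∏ j ∈ Finset.range k, mallowsP θ (j + 1)

/-- Positions (0-indexed) selected by the multi-threshold strategy: for each
threshold `k` in the list, the next selection is at the first position `p` with
`p ≥ k` (i.e. the first `k` candidates are rejected), `p ≥ lo` (after the previous
selection), and `p` a left-to-right maximum. -/
def selList {N : ℕ} (π : Equiv.Perm (Fin N)) : List ℕ → ℕ → List (Fin N)
  | [], _ => []
  | k :: ks, lo =>
    let s : Finset (Fin N) := Finset.univ.filter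
      (fun p => max k lo ≤ (p : ℕ) ∧ ∀ q : Fin N, q < p → π q < π p)
    if h : s.Nonempty then s.min' h :: selList π ks ((s.min' h : ℕ) + 1) else []

/-- The strategy wins on `π` if the position holding the largest value is selected. -/
def winnable {N : ℕ} (π : Equiv.Perm (Fin N)) (ks : List ℕ) : Prop :=
  ∃ p ∈ selList π ks 0, ∀ q : Fin N, π q ≤ π p

instance {N : ℕ} (π : Equiv.Perm (Fin N)) (ks : List ℕ) : Decidable (winnable π ks) :=
  inferInstanceAs (Decidable (∃ p ∈ selList π ks 0, ∀ q : Fin N, π q ≤ π p))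

/-- `W(N, k₁, …, k_s) = Σ_(winnable π ∈ S_N) θ^(c(π))`. -/
def winW (θ : ℝ) (N : ℕ) (ks : List ℕ) : ℝ :=
  ∑ π : Equiv.Perm (Fin N), if winnable π ks then θ ^ inversions π else 0

/-- `T_{≤j}(m, k₁, …, k_r)`: weight of permutations of `S_m` on which the strategy
makes at most `j` selections (with `j : ℤ`, so `T_{≤-1} = 0`). -/
def Tle (θ : ℝ) (m : ℕ) (ks : List ℕ) (j : ℤ) : ℝ :=
  ∑ π : Equiv.Perm (Fin m),
    if ((selList π ks 0).length : ℤ) ≤ j then θ ^ inversions π else 0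

/-- `T_j(m, k₁, …, k_r)`: weight of permutations of `S_m` on which the strategy
makes exactly `j` selections. -/
def Texact (θ : ℝ) (m : ℕ) (ks : List ℕ) (j : ℕ) : ℝ :=
  ∑ π : Equiv.Perm (Fin m),
    if (selList π ks 0).length = j then θ ^ inversions π else 0

namespace Stmt7Aux

variable {n : ℕ}

/-- Insert value `v` at the last position, keeping relative order of `σ`. -/
def insPerm (v : Fin (n+1)) (σ : Equiv.Perm (Fin n)) : Equiv.Perm (Fin (n+1)) :=
  finSuccEquivLast.trans ((Equiv.optionCongr σ).trans (finSuccEquiv' v).symm)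

@[simp] lemma insPerm_castSucc (v : Fin (n+1)) (σ : Equiv.Perm (Fin n)) (i : Fin n) :
    insPerm v σ (Fin.castSucc i) = v.succAbove (σ i) := by
  simp [insPerm]

@[simp] lemma insPerm_last (v : Fin (n+1)) (σ : Equiv.Perm (Fin n)) :
    insPerm v σ (Fin.last n) = v := by
  simp [insPerm]

lemma insPerm_bijective :
    Function.Bijective (fun p : Equiv.Perm (Fin n) × Fin (n+1) => insPerm p.2 p.1) := by
  rw [Fintype.bijective_iff_injective_and_card]
  constructor
  · rintro ⟨σ, v⟩ ⟨τ, w⟩ h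
    simp only at h
    have hv : v = w := by
      have := congrArg (fun f : Equiv.Perm (Fin (n+1)) => f (Fin.last n)) h
      simpa using this
    subst hv
    have hσ : σ = τ := by
      apply Equiv.ext; intro i
      have := congrArg (fun f : Equiv.Perm (Fin (n+1)) => f (Fin.castSucc i)) h
      simp only [insPerm_castSucc] at this
      exact Fin.succAbove_right_injective this
    rw [hσ]
  · simp [Fintype.card_perm, Nat.factorial_succ, Nat.mul_comm]

lemma coe_succAbove (v : Fin (n+1)) (j : Fin n) :
    (v.succAbove j : ℕ) = if (j:ℕ) < (v:ℕ) then (j:ℕ) else (j:ℕ)+1 := by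
  rcases lt_or_ge ((j:ℕ)) ((v:ℕ)) with h | h
  · rw [Fin.succAbove_of_castSucc_lt _ _ (by simpa [Fin.lt_def] using h)]
    simp [h]
  · rw [Fin.succAbove_of_le_castSucc _ _ (by simpa [Fin.le_def] using h)]
    simp [Nat.not_lt.mpr h]

lemma lt_succAbove_iff' (v : Fin (n+1)) (j : Fin n) :
    v < v.succAbove j ↔ (v:ℕ) ≤ (j:ℕ) := by
  rw [Fin.lt_def, coe_succAbove]; split_ifs with h <;> omega

lemma le_succAbove_iff' (v : Fin (n+1)) (j : Fin n) :
    v ≤ v.succAbove j ↔ (v:ℕ) ≤ (j:ℕ) := by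
  rw [Fin.le_def, coe_succAbove]; split_ifs with h <;> omega

lemma card_ge_filter (v : Fin (n+1)) (σ : Equiv.Perm (Fin n)) :
    (univ.filter fun i : Fin n => (v:ℕ) ≤ (σ i : ℕ)).card = n - v := by
  have h1 : (univ.filter fun i : Fin n => (v:ℕ) ≤ (σ i:ℕ)).card
      = (univ.filter fun j : Fin n => (v:ℕ) ≤ (j:ℕ)).card := by
    apply Finset.card_bij (fun i _ => σ i)
    · intro a ha; simp only [mem_filter, mem_univ, true_and] at ha ⊢; exact ha
    · intro a _ b _ hab; exact σ.injective hab
    · intro b hb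
      refine ⟨σ.symm b, ?_, by simp⟩
      simp only [mem_filter, mem_univ, true_and] at hb ⊢
      simpa using hb
  have h2 : (univ.filter fun j : Fin n => (v:ℕ) ≤ (j:ℕ)).card = (Finset.Ico (v:ℕ) n).card := by
    refine Finset.card_bij (fun j _ => (j:ℕ)) ?_ ?_ ?_
    · intro a ha; simp only [mem_filter, mem_univ, true_and] at ha
      simp only [Finset.mem_Ico]; exact ⟨ha, a.isLt⟩
    · intro a _ b _ h; exact Fin.val_injective h
    · intro b hb; simp only [Finset.mem_Ico] at hb
      refine ⟨⟨b, hb.2⟩, ?_, rfl⟩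
      simp only [mem_filter, mem_univ, true_and]
      exact hb.1
  rw [h1, h2, Nat.card_Ico]

lemma inversions_insPerm (v : Fin (n+1)) (σ : Equiv.Perm (Fin n)) :
    inversions (insPerm v σ) = inversions σ + (n - v) := by
  classical
  set π := insPerm v σ with hπ
  set A : Finset (Fin (n+1) × Fin (n+1)) :=
    univ.filter (fun x => x.1 < x.2 ∧ π x.2 < π x.1) with hA
  have hsplit := Finset.card_filter_add_card_filter_not
    (s := A) (p := fun x => x.2 = Fin.last n)
  have hB2 : (univ.filter fun i : Fin n => (v:ℕ) ≤ (σ i : ℕ)).card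
      = (A.filter (fun x => x.2 = Fin.last n)).card := by
    refine Finset.card_bij (fun i _ => (Fin.castSucc i, Fin.last n)) ?_ ?_ ?_
    · intro a ha
      simp only [mem_filter, mem_univ, true_and] at ha
      simp only [hA, mem_filter, mem_univ, true_and]
      refine ⟨⟨Fin.castSucc_lt_last a, ?_⟩, trivial⟩
      rw [hπ, insPerm_castSucc, insPerm_last, lt_succAbove_iff']
      exact ha
    · intro a _ b _ hab
      exact Fin.castSucc_injective n (congrArg Prod.fst hab)
    · rintro ⟨x, y⟩ hb
      simp only [hA, mem_filter, mem_univ, true_and] at hb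
      obtain ⟨⟨hxy, hlt⟩, rfl⟩ := hb
      obtain ⟨a, rfl⟩ := Fin.exists_castSucc_eq.mpr hxy.ne
      refine ⟨a, ?_, rfl⟩
      simp only [mem_filter, mem_univ, true_and]
      rw [hπ, insPerm_castSucc, insPerm_last, lt_succAbove_iff'] at hlt
      exact hlt
  have hB1 : inversions σ = (A.filter (fun x => ¬ x.2 = Fin.last n)).card := by
    refine Finset.card_bij (fun x _ => (Fin.castSucc x.1, Fin.castSucc x.2)) ?_ ?_ ?_
    · rintro ⟨a1, a2⟩ ha
      simp only [inversions, mem_filter, mem_univ, true_and] at ha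
      simp only [hA, mem_filter, mem_univ, true_and]
      refine ⟨⟨?_, ?_⟩, (Fin.castSucc_lt_last a2).ne⟩
      · exact Fin.castSucc_lt_castSucc_iff.mpr ha.1
      · rw [hπ, insPerm_castSucc, insPerm_castSucc]
        exact Fin.succAbove_lt_succAbove_iff.mpr ha.2
    · rintro ⟨a1, a2⟩ _ ⟨b1, b2⟩ _ hab
      simp only [Prod.mk.injEq] at hab
      have h1 := Fin.castSucc_injective n hab.1
      have h2 := Fin.castSucc_injective n hab.2
      simp [h1, h2]
    · rintro ⟨x, y⟩ hb
      simp only [hA, mem_filter, mem_univ, true_and] at hb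
      obtain ⟨⟨hxy, hlt⟩, hy⟩ := hb
      obtain ⟨b, rfl⟩ := Fin.exists_castSucc_eq.mpr hy
      have hx : x ≠ Fin.last n := (hxy.trans (Fin.castSucc_lt_last b)).ne
      obtain ⟨a, rfl⟩ := Fin.exists_castSucc_eq.mpr hx
      refine ⟨(a, b), ?_, rfl⟩
      simp only [inversions, mem_filter, mem_univ, true_and]
      rw [hπ, insPerm_castSucc, insPerm_castSucc] at hlt
      exact ⟨Fin.castSucc_lt_castSucc_iff.mp hxy, Fin.succAbove_lt_succAbove_iff.mp hlt⟩
  have : inversions π = A.card := rfl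
  rw [this, ← hsplit, ← hB2, ← hB1, card_ge_filter]
  omega

def selSet {N : ℕ} (π : Equiv.Perm (Fin N)) (k lo : ℕ) : Finset (Fin N) :=
  Finset.univ.filter (fun p => max k lo ≤ (p : ℕ) ∧ ∀ q : Fin N, q < p → π q < π p)

lemma selList_cons {N : ℕ} (π : Equiv.Perm (Fin N)) (k : ℕ) (ks : List ℕ) (lo : ℕ) :
    selList π (k :: ks) lo = if h : (selSet π k lo).Nonempty
      then (selSet π k lo).min' h :: selList π ks (((selSet π k lo).min' h : ℕ) + 1)
      else [] := rfl

lemma mem_selSet {N : ℕ} {π : Equiv.Perm (Fin N)} {k lo : ℕ} {p : Fin N} :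
    p ∈ selSet π k lo ↔ (k ≤ (p:ℕ) ∧ lo ≤ (p:ℕ)) ∧ ∀ q, q < p → π q < π p := by
  simp [selSet, max_le_iff]

lemma selList_nil_of_ge {N : ℕ} (π : Equiv.Perm (Fin N)) :
    ∀ (ks : List ℕ) (lo : ℕ), N ≤ lo → selList π ks lo = []
  | [], _, _ => rfl
  | k :: ks, lo, h => by
    rw [selList_cons, dif_neg]
    rintro ⟨p, hp⟩
    rw [mem_selSet] at hp
    have := p.isLt
    omega

lemma castSucc_mem_selSet (v : Fin (n+1)) (σ : Equiv.Perm (Fin n)) (k lo : ℕ) (p : Fin n) :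
    Fin.castSucc p ∈ selSet (insPerm v σ) k lo ↔ p ∈ selSet σ k lo := by
  simp only [mem_selSet, Fin.coe_castSucc]
  constructor
  · rintro ⟨hk, hm⟩
    refine ⟨hk, fun q hq => ?_⟩
    have := hm (Fin.castSucc q) (Fin.castSucc_lt_castSucc_iff.mpr hq)
    simpa only [insPerm_castSucc, Fin.succAbove_lt_succAbove_iff] using this
  · rintro ⟨hk, hm⟩
    refine ⟨hk, fun q hq => ?_⟩
    have hql : q ≠ Fin.last n := (hq.trans (Fin.castSucc_lt_last p)).ne
    obtain ⟨q', rfl⟩ := Fin.exists_castSucc_eq.mpr hql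
    rw [insPerm_castSucc, insPerm_castSucc, Fin.succAbove_lt_succAbove_iff]
    exact hm q' (Fin.castSucc_lt_castSucc_iff.mp hq)

lemma last_mem_selSet (v : Fin (n+1)) (σ : Equiv.Perm (Fin n)) (k lo : ℕ) :
    Fin.last n ∈ selSet (insPerm v σ) k lo ↔ v = Fin.last n ∧ k ≤ n ∧ lo ≤ n := by
  simp only [mem_selSet, Fin.val_last]
  constructor
  · rintro ⟨hk, hm⟩
    refine ⟨?_, hk⟩
    by_contra hv
    have hvn : (v:ℕ) < n := by
      have := v.isLt
      have : (v:ℕ) ≠ n := fun h => hv (Fin.ext (by simp [h]))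
      omega
    have hn : 0 < n := by omega
    set j : Fin n := σ.symm ⟨n-1, by omega⟩ with hj
    have := hm (Fin.castSucc j) (Fin.castSucc_lt_last j)
    rw [insPerm_castSucc, insPerm_last] at this
    rw [Fin.lt_def, coe_succAbove] at this
    rw [hj, Equiv.apply_symm_apply] at this
    simp only at this
    split_ifs at this <;> omega
  · rintro ⟨rfl, hk⟩
    refine ⟨hk, fun q hq => ?_⟩
    obtain ⟨q', rfl⟩ := Fin.exists_castSucc_eq.mpr hq.ne
    rw [insPerm_castSucc, insPerm_last, Fin.succAbove_last]
    exact Fin.castSucc_lt_last _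

lemma selSet_insPerm_ne {v : Fin (n+1)} (σ : Equiv.Perm (Fin n)) (hv : v ≠ Fin.last n)
    (k lo : ℕ) :
    selSet (insPerm v σ) k lo = (selSet σ k lo).map Fin.castSuccEmb := by
  ext p
  rcases eq_or_ne p (Fin.last n) with rfl | hp
  · simp only [last_mem_selSet, Finset.mem_map]
    constructor
    · rintro ⟨h, -⟩; exact absurd h hv
    · rintro ⟨q, -, hq⟩
      exact absurd hq (Fin.castSucc_lt_last q).ne
  · obtain ⟨q, rfl⟩ := Fin.exists_castSucc_eq.mpr hp
    rw [castSucc_mem_selSet]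
    simp only [Finset.mem_map]
    constructor
    · intro h; exact ⟨q, h, rfl⟩
    · rintro ⟨q', hq', hq⟩
      have : q' = q := Fin.castSucc_injective n hq
      rwa [← this]

lemma min'_map_castSucc (s : Finset (Fin n)) (h : s.Nonempty) :
    (s.map Fin.castSuccEmb).min' (Finset.map_nonempty.mpr h) = Fin.castSucc (s.min' h) := by
  apply le_antisymm
  · apply Finset.min'_le
    exact Finset.mem_map_of_mem _ (Finset.min'_mem s h)
  · apply Finset.le_min'
    intro y hy
    rw [Finset.mem_map] at hy
    obtain ⟨q, hq, rfl⟩ := hy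
    exact Fin.castSucc_le_castSucc_iff.mpr (Finset.min'_le s q hq)

lemma selList_insPerm_ne {v : Fin (n+1)} (σ : Equiv.Perm (Fin n)) (hv : v ≠ Fin.last n) :
    ∀ (ks : List ℕ) (lo : ℕ),
      selList (insPerm v σ) ks lo = (selList σ ks lo).map Fin.castSucc
  | [], lo => rfl
  | k :: ks, lo => by
    rw [selList_cons, selList_cons, selSet_insPerm_ne σ hv]
    by_cases h : (selSet σ k lo).Nonempty
    · rw [dif_pos (Finset.map_nonempty.mpr h), dif_pos h, min'_map_castSucc _ h, List.map_cons]
      rw [Fin.coe_castSucc]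
      rw [selList_insPerm_ne σ hv ks _]
    · rw [dif_neg h, dif_neg (by simpa [Finset.map_nonempty] using h)]
      rfl

lemma min'_congr' {α : Type*} [LinearOrder α] {s t : Finset α} (h : s = t)
    (hs : s.Nonempty) : s.min' hs = t.min' (h ▸ hs) := by subst h; rfl

lemma selSet_insPerm_last (σ : Equiv.Perm (Fin n)) {k lo : ℕ} (hk : k ≤ n) (hlo : lo ≤ n) :
    selSet (insPerm (Fin.last n) σ) k lo
      = insert (Fin.last n) ((selSet σ k lo).map Fin.castSuccEmb) := by
  ext p
  rcases eq_or_ne p (Fin.last n) with rfl | hp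
  · simp [last_mem_selSet, hk, hlo]
  · obtain ⟨q, rfl⟩ := Fin.exists_castSucc_eq.mpr hp
    rw [Finset.mem_insert, castSucc_mem_selSet]
    simp only [Finset.mem_map]
    constructor
    · intro h; exact Or.inr ⟨q, h, rfl⟩
    · rintro (h | ⟨q', hq', hq⟩)
      · exact absurd h hp
      · have : q' = q := Fin.castSucc_injective n hq
        rwa [← this]

lemma min'_insert_last (s : Finset (Fin n)) (h : s.Nonempty) :
    (insert (Fin.last n) (s.map Fin.castSuccEmb)).min' (Finset.insert_nonempty _ _)
      = Fin.castSucc (s.min' h) := by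
  apply le_antisymm
  · apply Finset.min'_le
    exact Finset.mem_insert_of_mem (Finset.mem_map_of_mem _ (Finset.min'_mem s h))
  · apply Finset.le_min'
    intro y hy
    rcases Finset.mem_insert.mp hy with rfl | hy
    · exact (Fin.castSucc_lt_last _).le
    · rw [Finset.mem_map] at hy
      obtain ⟨q, hq, rfl⟩ := hy
      exact Fin.castSucc_le_castSucc_iff.mpr (Finset.min'_le s q hq)

lemma min'_insert_last_empty (s : Finset (Fin n)) (h : ¬ s.Nonempty) :
    (insert (Fin.last n) (s.map Fin.castSuccEmb)).min' (Finset.insert_nonempty _ _)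
      = Fin.last n := by
  rw [Finset.not_nonempty_iff_eq_empty] at h
  simp [h]

lemma selList_insPerm_last (σ : Equiv.Perm (Fin n)) :
    ∀ (ks : List ℕ) (lo : ℕ), (∀ k ∈ ks, k ≤ n) → lo ≤ n →
      selList (insPerm (Fin.last n) σ) ks lo =
        (selList σ ks lo).map Fin.castSucc ++
          (if (selList σ ks lo).length < ks.length then [Fin.last n] else [])
  | [], lo, _, _ => rfl
  | k :: ks, lo, hks, hlo => by
    have hk : k ≤ n := hks k (List.mem_cons_self)
    have hks' : ∀ k' ∈ ks, k' ≤ n := fun k' hk' => hks k' (List.mem_cons_of_mem k hk')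
    rw [selList_cons (insPerm (Fin.last n) σ), selList_cons σ]
    by_cases h : (selSet σ k lo).Nonempty
    · have hne : (selSet (insPerm (Fin.last n) σ) k lo).Nonempty := by
        rw [selSet_insPerm_last σ hk hlo]; exact Finset.insert_nonempty _ _
      rw [dif_pos hne, dif_pos h]
      have hmin : (selSet (insPerm (Fin.last n) σ) k lo).min' hne
          = Fin.castSucc ((selSet σ k lo).min' h) :=
        (min'_congr' (selSet_insPerm_last σ hk hlo) hne).trans (min'_insert_last _ h)
      rw [hmin, Fin.coe_castSucc]
      have hm1 : ((selSet σ k lo).min' h : ℕ) + 1 ≤ n := ((selSet σ k lo).min' h).isLt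
      rw [selList_insPerm_last σ ks _ hks' hm1]
      simp only [List.map_cons, List.length_cons, List.cons_append]
      congr 2
      simp only [Nat.add_lt_add_iff_right]
    · have hne : (selSet (insPerm (Fin.last n) σ) k lo).Nonempty := by
        rw [selSet_insPerm_last σ hk hlo]; exact Finset.insert_nonempty _ _
      rw [dif_pos hne, dif_neg h]
      have hmin : (selSet (insPerm (Fin.last n) σ) k lo).min' hne = Fin.last n :=
        (min'_congr' (selSet_insPerm_last σ hk hlo) hne).trans (min'_insert_last_empty _ h)
      rw [hmin, Fin.val_last, selList_nil_of_ge _ ks (n+1) le_rfl]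
      simp

lemma winnable_insPerm_ne {v : Fin (n+1)} (σ : Equiv.Perm (Fin n)) (hv : v ≠ Fin.last n)
    (ks : List ℕ) : winnable (insPerm v σ) ks ↔ winnable σ ks := by
  unfold winnable
  rw [selList_insPerm_ne σ hv]
  constructor
  · rintro ⟨p, hp, hmax⟩
    rw [List.mem_map] at hp
    obtain ⟨q, hq, rfl⟩ := hp
    refine ⟨q, hq, fun r => ?_⟩
    have := hmax (Fin.castSucc r)
    simpa only [insPerm_castSucc, Fin.succAbove_le_succAbove_iff] using this
  · rintro ⟨p, hp, hmax⟩
    refine ⟨Fin.castSucc p, List.mem_map_of_mem hp, fun q => ?_⟩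
    rcases eq_or_ne q (Fin.last n) with rfl | hq
    · rw [insPerm_last, insPerm_castSucc, le_succAbove_iff']
      have hvn : (v:ℕ) < n := by
        have h1 := v.isLt
        have h2 : (v:ℕ) ≠ n := fun h => hv (Fin.ext (by simp [h]))
        omega
      have := hmax (σ.symm ⟨n-1, by omega⟩)
      rw [Equiv.apply_symm_apply, Fin.le_def] at this
      simp only at this
      omega
    · obtain ⟨q', rfl⟩ := Fin.exists_castSucc_eq.mpr hq
      rw [insPerm_castSucc, insPerm_castSucc, Fin.succAbove_le_succAbove_iff]
      exact hmax q'

lemma winnable_insPerm_last (σ : Equiv.Perm (Fin n)) (ks : List ℕ)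
    (hks : ∀ k ∈ ks, k ≤ n) :
    winnable (insPerm (Fin.last n) σ) ks ↔ (selList σ ks 0).length < ks.length := by
  unfold winnable
  rw [selList_insPerm_last σ ks 0 hks (Nat.zero_le n)]
  constructor
  · rintro ⟨p, hp, hmax⟩
    have hpl : p = Fin.last n := by
      have h1 := hmax ((insPerm (Fin.last n) σ).symm (Fin.last n))
      rw [Equiv.apply_symm_apply] at h1
      have h2 : insPerm (Fin.last n) σ p = Fin.last n := le_antisymm (Fin.le_last _) h1
      have h3 : insPerm (Fin.last n) σ (Fin.last n) = Fin.last n := insPerm_last _ _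
      exact (insPerm (Fin.last n) σ).injective (h2.trans h3.symm)
    subst hpl
    by_contra hlen
    rw [if_neg hlen, List.append_nil, List.mem_map] at hp
    obtain ⟨q, -, hq⟩ := hp
    exact absurd hq (Fin.castSucc_lt_last q).ne
  · intro hlen
    refine ⟨Fin.last n, ?_, fun q => Fin.le_last _ |>.trans_eq (insPerm_last _ _).symm⟩
    rw [List.mem_append, if_pos hlen]
    exact Or.inr (List.mem_singleton_self _)

lemma le_getLast_of_sorted :
    ∀ (l : List ℕ) (h : l ≠ []), l.Pairwise (· ≤ ·) → ∀ k ∈ l, k ≤ l.getLast h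
  | [a], _, _, k, hk => by
    simp only [List.mem_singleton] at hk
    simp [hk]
  | a :: b :: t, _, hs, k, hk => by
    rw [List.getLast_cons (by simp : (b :: t) ≠ [])]
    rcases List.mem_cons.mp hk with rfl | hk'
    · have h1 : k ≤ b := (List.pairwise_cons.mp hs).1 b (by simp)
      have h2 := le_getLast_of_sorted (b :: t) (by simp) (List.pairwise_cons.mp hs).2
        b (by simp)
      exact h1.trans h2
    · exact le_getLast_of_sorted (b :: t) (by simp) (List.pairwise_cons.mp hs).2 k hk'

end Stmt7Aux

open Stmt7Aux

theorem stmt7 (θ : ℝ) (ks : List ℕ) (hne : ks ≠ []) (hsort : ks.Pairwise (· ≤ ·))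
    (N : ℕ) (hN : ks.getLast hne + 1 ≤ N) :
    winW θ N ks = θ * mallowsP θ (N - 1) * winW θ (N - 1) ks +
      Tle θ (N - 1) ks ((ks.length : ℤ) - 1) := by
  obtain ⟨n, rfl⟩ : ∃ n, N = n + 1 := ⟨N - 1, by omega⟩
  have hks : ∀ k ∈ ks, k ≤ n := fun k hk => by
    have := le_getLast_of_sorted ks hne hsort k hk
    omega
  simp only [Nat.add_sub_cancel]
  have hbij := Fintype.sum_bijective
    (fun p : Equiv.Perm (Fin n) × Fin (n+1) => insPerm p.2 p.1) insPerm_bijective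
    (fun p => if winnable (insPerm p.2 p.1) ks then θ ^ inversions (insPerm p.2 p.1) else 0)
    (fun π => if winnable π ks then θ ^ inversions π else 0)
    (fun p => rfl)
  rw [winW, ← hbij, Fintype.sum_prod_type]
  have hsum : ∑ i : Fin n, θ ^ (n - (i:ℕ)) = θ * mallowsP θ n := by
    rw [Fin.sum_univ_eq_sum_range (fun j => θ ^ (n - j)), ← Finset.sum_range_reflect,
      mallowsP, Finset.mul_sum]
    apply Finset.sum_congr rfl
    intro j hj
    rw [Finset.mem_range] at hj
    rw [show n - (n - 1 - j) = j + 1 by omega, pow_succ, mul_comm]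
  have hterm : ∀ σ : Equiv.Perm (Fin n),
      (∑ v : Fin (n+1), if winnable (insPerm v σ) ks
          then θ ^ inversions (insPerm v σ) else 0)
        = (if winnable σ ks then θ ^ inversions σ else 0) * (θ * mallowsP θ n)
          + (if ((selList σ ks 0).length : ℤ) ≤ (ks.length : ℤ) - 1
              then θ ^ inversions σ else 0) := by
    intro σ
    rw [Fin.sum_univ_castSucc]
    congr 1
    · have : ∀ i : Fin n,
          (if winnable (insPerm (Fin.castSucc i) σ) ks
            then θ ^ inversions (insPerm (Fin.castSucc i) σ) else 0)
          = (if winnable σ ks then θ ^ inversions σ else 0) * θ ^ (n - (i:ℕ)) := by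
        intro i
        simp only [winnable_insPerm_ne σ (Fin.castSucc_lt_last i).ne,
          inversions_insPerm, Fin.coe_castSucc, pow_add]
        split_ifs <;> simp
      rw [Finset.sum_congr rfl (fun i _ => this i), ← Finset.mul_sum, hsum]
    · have hiff : winnable (insPerm (Fin.last n) σ) ks
          ↔ ((selList σ ks 0).length : ℤ) ≤ (ks.length : ℤ) - 1 := by
        rw [winnable_insPerm_last σ ks hks]
        omega
      simp only [hiff, inversions_insPerm, Fin.val_last, Nat.sub_self, Nat.add_zero]
  rw [Finset.sum_congr rfl (fun σ _ => hterm σ), Finset.sum_add_distrib]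
  rw [winW, Tle, ← Finset.sum_mul]
  ring
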